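/- Correctness of the arc-removal procedure for the unidentifiable situation: assume the graph with adjacency relation A is acyclic. Let A' be the adjacency relation obtained from A by deleting every arc (Q, E) for which there exist S ∈ S_π ∩ S̄_π (computed in A) and r ∈ R with Relation.ReflTransGen A S r and Relation.ReflTransGen A r Q. Then in the modified graph A' one has S_π(A') ∩ S̄_π(A') = ∅, where S_π(A') and S̄_π(A') are defined exactly as S_π and S̄_π but with respect to the relation A'. -/

import Mathlib

private lemma chain_rtg {V : Type*} {B : V → V → Prop} {l : List V} {u x : V}
    (h : List.Chain B u l) (hx : x ∈ u :: l) : Relation.ReflTransGen B u x := by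
  induction l generalizing u with
  | nil => simp only [List.mem_singleton] at hx; subst hx; exact .refl
  | cons a l ih =>
    rcases List.mem_cons.1 hx with rfl | hx'
    · exact .refl
    · rcases List.chain_cons.1 h with ⟨hua, hc⟩
      exact .head hua (ih hc hx')

private lemma chain_split {V : Type*} {B : V → V → Prop} {l : List V} {u w x : V}
    (h : List.Chain B u l) (hl : (u :: l).getLast (List.cons_ne_nil u l) = w)
    (hx : x ∈ u :: l) (hxw : x ≠ w) :
    ∃ Q, Relation.ReflTransGen B u x ∧ Relation.ReflTransGen B x Q ∧ B Q w := by
  induction l generalizing u x with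
  | nil =>
    simp only [List.getLast_singleton] at hl
    simp only [List.mem_singleton] at hx
    subst hl; subst hx; exact absurd rfl hxw
  | cons a l ih =>
    rcases List.chain_cons.1 h with ⟨hua, hc⟩
    have hl' : (a :: l).getLast (List.cons_ne_nil a l) = w := by
      rwa [List.getLast_cons (List.cons_ne_nil a l)] at hl
    rcases List.mem_cons.1 hx with rfl | hx'
    · by_cases haw : a = w
      · subst haw; exact ⟨x, .refl, .refl, hua⟩
      · obtain ⟨Q, _, h2, h3⟩ := ih hc hl' List.mem_cons_self haw
        exact ⟨Q, .refl, .head hua h2, h3⟩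
    · obtain ⟨Q, h1, h2, h3⟩ := ih hc hl' hx' hxw
      exact ⟨Q, .head hua h1, h2, h3⟩


/-- `S ∈ S_π`: `S` is a child of `C` and the arc `(C,S)` occurs in some walk from
`C` to `E` passing through the set `R` of redlining attributes. -/
def memSpi {V : Type*} (A : V → V → Prop) (C E : V) (R : Set V) (S : V) : Prop :=
  A C S ∧ ∃ l : List V, List.Chain A C l ∧
    (C :: l).getLast (List.cons_ne_nil C l) = E ∧
    [C, S] <:+: (C :: l) ∧ ∃ x ∈ C :: l, x ∈ R

/-- `S ∈ S̄_π`: `S` is a child of `C` such that either there is no walk from `S`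
to `E`, or the arc `(C,S)` occurs in some walk from `C` to `E` avoiding `R`. -/
def memSpiBar {V : Type*} (A : V → V → Prop) (C E : V) (R : Set V) (S : V) : Prop :=
  A C S ∧
    ((¬ ∃ l : List V, List.Chain A S l ∧
        (S :: l).getLast (List.cons_ne_nil S l) = E) ∨
      ∃ l : List V, List.Chain A C l ∧
        (C :: l).getLast (List.cons_ne_nil C l) = E ∧
        [C, S] <:+: (C :: l) ∧ ∀ x ∈ C :: l, x ∉ R)

/-- Correctness of the arc-removal procedure for the unidentifiable situation:
if the graph `A` is acyclic and `A'` is obtained from `A` by deleting every arc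
`(Q, E)` for which there exist `S ∈ S_π ∩ S̄_π` (computed in `A`) and `r ∈ R`
with `S ⟶* r` and `r ⟶* Q` (reflexive-transitive closure of `A`), then in the
modified graph `A'` one has `S_π(A') ∩ S̄_π(A') = ∅`. -/
theorem arc_removal_makes_disjoint {V : Type*} [Fintype V]
    (A : V → V → Prop) (C E : V) (R : Set V)
    (hacyc : ∀ v : V, ¬ Relation.TransGen A v v)
    (hCR : C ∉ R) (hER : E ∉ R)
    (A' : V → V → Prop)
    (hA' : ∀ u v : V, A' u v ↔ A u v ∧
        ¬ (v = E ∧ ∃ S : V, memSpi A C E R S ∧ memSpiBar A C E R S ∧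
            ∃ r ∈ R, Relation.ReflTransGen A S r ∧ Relation.ReflTransGen A r u)) :
    {S : V | memSpi A' C E R S} ∩ {S : V | memSpiBar A' C E R S} = ∅ := by
  ext S
  simp only [Set.mem_inter_iff, Set.mem_setOf_eq, Set.mem_empty_iff_false, iff_false]
  rintro ⟨⟨hCS', l, hchain, hlast, hinfix, x, hxmem, hxR⟩, _, hbar⟩
  have hsub : ∀ u v, A' u v → A u v := fun u v h => ((hA' u v).1 h).1
  -- the infix [C,S] must be at the start of the walk, by acyclicity
  obtain ⟨s, t, hst⟩ := hinfix
  have hs : s = [] := by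
    cases s with
    | nil => rfl
    | cons c s' =>
      exfalso
      have hst' : c = C ∧ s' ++ C :: S :: t = l := by
        simpa using hst
      obtain ⟨hc, hl⟩ := hst'
      have hCl : C ∈ l := by rw [← hl]; simp
      cases l with
      | nil => simp at hCl
      | cons a l' =>
        rcases List.chain_cons.1 hchain with ⟨hCa, hc'⟩
        exact hacyc C (Relation.TransGen.head' (hsub _ _ hCa)
          (chain_rtg (hc'.imp hsub) hCl))
  subst hs
  have hlt : l = S :: t := by simpa using hst.symm
  subst hlt
  rcases List.chain_cons.1 hchain with ⟨_, hchainS⟩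
  have hlastS : (S :: t).getLast (List.cons_ne_nil S t) = E := by
    rwa [List.getLast_cons (List.cons_ne_nil S t)] at hlast
  -- S has a walk to E in A', so the second disjunct of memSpiBar A' holds
  rcases hbar with hno | ⟨l2, hch2, hlast2, hinf2, hav2⟩
  · exact hno ⟨t, hchainS, hlastS⟩
  -- S ∈ S_π(A) ∩ S̄_π(A)
  have hSpiA : memSpi A C E R S :=
    ⟨hsub _ _ hCS', S :: t, List.IsChain.imp (fun _ _ h => hsub _ _ h) hchain, hlast, ⟨[], t, by simp⟩, x, hxmem, hxR⟩
  have hBarA : memSpiBar A C E R S :=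
    ⟨hsub _ _ hCS', Or.inr ⟨l2, List.IsChain.imp (fun _ _ h => hsub _ _ h) hch2, hlast2, hinf2, hav2⟩⟩
  -- locate x on the walk and find the penultimate vertex Q
  have hxC : x ≠ C := fun h => hCR (h ▸ hxR)
  have hxE : x ≠ E := fun h => hER (h ▸ hxR)
  have hxmem' : x ∈ S :: t := by
    rcases List.mem_cons.1 hxmem with rfl | h
    · exact absurd rfl hxC
    · exact h
  obtain ⟨Q, h1, h2, hQE⟩ := chain_split hchainS hlastS hxmem' hxE
  exact ((hA' Q E).1 hQE).2 ⟨rfl, S, hSpiA, hBarA, x, hxR,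
    Relation.ReflTransGen.mono hsub _ _ h1, Relation.ReflTransGen.mono hsub _ _ h2⟩
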